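/- Let λ₀ > 0 and P ∈ ℝ, and define λ(t) = √( t² + (2λ₀P/√(P²+1))·t + λ₀² ) and f(t) = arctan( (√(P²+1)/λ₀)·t + P ) − arctan(P). Then for every t ∈ ℝ, λ′(t)² + λ(t)²·f′(t)² = 1. -/

import Mathlib

/-- Unit-speed identity for the Segre geodesic in the warped-product metric:
with `λ(t) = √(t² + (2λ₀P/√(P²+1))·t + λ₀²)` and
`f(t) = arctan(√(P²+1)/λ₀ · t + P) − arctan P`, one has
`λ′(t)² + λ(t)²·f′(t)² = 1` for all `t`. -/
theorem segre_geodesic_unit_speed (lam0 P : ℝ) (hlam0 : 0 < lam0) :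
    ∀ t : ℝ,
      (deriv (fun t : ℝ =>
          Real.sqrt (t ^ 2 + 2 * lam0 * P / Real.sqrt (P ^ 2 + 1) * t + lam0 ^ 2)) t) ^ 2
      + (Real.sqrt (t ^ 2 + 2 * lam0 * P / Real.sqrt (P ^ 2 + 1) * t + lam0 ^ 2)) ^ 2 *
          (deriv (fun t : ℝ =>
            Real.arctan (Real.sqrt (P ^ 2 + 1) / lam0 * t + P) - Real.arctan P) t) ^ 2
      = 1 := by
  intro t
  have hs : 0 < Real.sqrt (P ^ 2 + 1) := Real.sqrt_pos.2 (by positivity)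
  set s := Real.sqrt (P ^ 2 + 1) with hsdef
  have hs2 : s ^ 2 = P ^ 2 + 1 := Real.sq_sqrt (by positivity)
  have hQpos : 0 < t ^ 2 + 2 * lam0 * P / s * t + lam0 ^ 2 := by
    have key : t ^ 2 + 2 * lam0 * P / s * t + lam0 ^ 2
        = (t + lam0 * P / s) ^ 2 + lam0 ^ 2 / s ^ 2 := by
      field_simp
      linear_combination lam0 ^ 2 * hs2
    rw [key]; positivity
  set Q : ℝ := t ^ 2 + 2 * lam0 * P / s * t + lam0 ^ 2 with hQdef
  have hQne : Q ≠ 0 := ne_of_gt hQpos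
  -- derivative of the radial part
  have hQdiff : HasDerivAt (fun u : ℝ => u ^ 2 + 2 * lam0 * P / s * u + lam0 ^ 2)
      (2 * t + 2 * lam0 * P / s) t := by
    have h1 : HasDerivAt (fun u : ℝ => u ^ 2) (2 * t) t := by
      simpa using hasDerivAt_pow 2 t
    have h2 : HasDerivAt (fun u : ℝ => 2 * lam0 * P / s * u) (2 * lam0 * P / s) t := by
      simpa using (hasDerivAt_id t).const_mul (2 * lam0 * P / s)
    simpa using (h1.add h2).add_const (lam0 ^ 2)
  have hder1 : deriv (fun u : ℝ =>
      Real.sqrt (u ^ 2 + 2 * lam0 * P / s * u + lam0 ^ 2)) t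
      = (2 * t + 2 * lam0 * P / s) / (2 * Real.sqrt Q) :=
    (hQdiff.sqrt hQne).deriv
  -- derivative of the angular part
  have hinner : HasDerivAt (fun u : ℝ => s / lam0 * u + P) (s / lam0) t := by
    simpa using ((hasDerivAt_id t).const_mul (s / lam0)).add_const P
  have hder2 : deriv (fun u : ℝ =>
      Real.arctan (s / lam0 * u + P) - Real.arctan P) t
      = (s / lam0) / (1 + (s / lam0 * t + P) ^ 2) := by
    rw [(hinner.arctan.sub_const (Real.arctan P)).deriv]; ring
  rw [hder1, hder2]
  have hsqQ : Real.sqrt Q ^ 2 = Q := Real.sq_sqrt hQpos.le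
  have hsqrtne : Real.sqrt Q ≠ 0 := ne_of_gt (Real.sqrt_pos.2 hQpos)
  have hden : 1 + (s / lam0 * t + P) ^ 2 = s ^ 2 / lam0 ^ 2 * Q := by
    rw [hQdef]
    field_simp
    linear_combination (-(lam0 ^ 2)) * hs2
  rw [hden]
  have hQs : Q * s = t ^ 2 * s + 2 * lam0 * P * t + lam0 ^ 2 * s := by
    rw [hQdef]; field_simp
  set r := Real.sqrt Q with hrdef
  clear_value r
  clear hrdef
  clear_value Q
  clear hQdef
  clear_value s
  clear hsdef
  field_simp
  linear_combination (-(s*Q^2)) * hQs + (-(lam0^2*Q^2)) * hs2 + (lam0^2*(r^2+Q) - s^2*Q^2) * hsqQ
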